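/- The systems {c_n}_{n=0}^∞ and {s_n}_{n=1}^∞ are linearly independent over ℂ as functions on [-b,b]: if N ∈ ℕ and a₀,…,a_N ∈ ℂ satisfy Σ_{n=0}^N a_n·c_n(x) = 0 for all x ∈ [-b,b], then a₀ = … = a_N = 0; likewise, if b₁,…,b_N ∈ ℂ satisfy Σ_{n=1}^N b_n·s_n(x) = 0 for all x ∈ [-b,b], then b₁ = … = b_N = 0. -/

import Mathlib

open Set MeasureTheory Filter

/-- Second partial derivative with respect to the first variable, within `[-b,b]`. -/
noncomputable def d2x (b : ℝ) (K : ℝ → ℝ → ℂ) (x t : ℝ) : ℂ :=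
  derivWithin (fun x' => derivWithin (fun x'' => K x'' t) (Set.Icc (-b) b) x') (Set.Icc (-b) b) x

/-- Second partial derivative with respect to the second variable, within `[-b,b]`. -/
noncomputable def d2t (b : ℝ) (K : ℝ → ℝ → ℂ) (x t : ℝ) : ℂ :=
  derivWithin (fun t' => derivWithin (fun t'' => K x t'') (Set.Icc (-b) b) t') (Set.Icc (-b) b) t

/-- `K` is a transmutation kernel for `(q, h)` on `[-b,b]`: it is twice continuously
differentiable, satisfies `∂²K/∂x² − q(x)K = ∂²K/∂t²` on `[-b,b]²`, and the Goursat data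
`K(x,x) = h/2 + (1/2)∫₀ˣ q` and `K(x,−x) = h/2`. -/
def IsTransmutationKernel (b : ℝ) (q : ℝ → ℂ) (h : ℂ) (K : ℝ → ℝ → ℂ) : Prop :=
  ContDiffOn ℝ 2 (fun p : ℝ × ℝ => K p.1 p.2) (Set.Icc (-b) b ×ˢ Set.Icc (-b) b) ∧
  (∀ x ∈ Set.Icc (-b) b, ∀ t ∈ Set.Icc (-b) b, d2x b K x t - q x * K x t = d2t b K x t) ∧
  (∀ x ∈ Set.Icc (-b) b, K x x = h / 2 + (1 / 2) * ∫ s in (0:ℝ)..x, q s) ∧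
  (∀ x ∈ Set.Icc (-b) b, K x (-x) = h / 2)
/-- The recursive integrals `X⁽⁰⁾ ≡ 1`, `X⁽ⁿ⁾(x) = n ∫_{x₀}^x X⁽ⁿ⁻¹⁾(s) (f(s)²)^((−1)ⁿ) ds`. -/
noncomputable def Xrec (x₀ : ℝ) (f : ℝ → ℂ) : ℕ → ℝ → ℂ
  | 0 => fun _ => 1
  | n + 1 => fun x => ((n : ℂ) + 1) * ∫ s in x₀..x, Xrec x₀ f n s * (f s ^ 2) ^ ((-1 : ℤ) ^ (n + 1))

/-- The recursive integrals `X̃⁽⁰⁾ ≡ 1`, `X̃⁽ⁿ⁾(x) = n ∫_{x₀}^x X̃⁽ⁿ⁻¹⁾(s) (f(s)²)^((−1)^(n−1)) ds`. -/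
noncomputable def Xtrec (x₀ : ℝ) (f : ℝ → ℂ) : ℕ → ℝ → ℂ
  | 0 => fun _ => 1
  | n + 1 => fun x => ((n : ℂ) + 1) * ∫ s in x₀..x, Xtrec x₀ f n s * (f s ^ 2) ^ ((-1 : ℤ) ^ n)

/-- `φ_k = f·X⁽ᵏ⁾` for odd `k`, `φ_k = f·X̃⁽ᵏ⁾` for even `k`. -/
noncomputable def phiF (x₀ : ℝ) (f : ℝ → ℂ) (k : ℕ) (x : ℝ) : ℂ :=
  if Odd k then f x * Xrec x₀ f k x else f x * Xtrec x₀ f k x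

/-- `ψ_k = X̃⁽ᵏ⁾/f` for odd `k`, `ψ_k = X⁽ᵏ⁾/f` for even `k`. -/
noncomputable def psiF (x₀ : ℝ) (f : ℝ → ℂ) (k : ℕ) (x : ℝ) : ℂ :=
  if Odd k then Xtrec x₀ f k x / f x else Xrec x₀ f k x / f x

/-- The generalized wave polynomial `u_{2m−1}(x,t) = Σ_{even k≤m} C(m,k) φ_{m−k}(x) tᵏ`. -/
noncomputable def uA (x₀ : ℝ) (f : ℝ → ℂ) (m : ℕ) (x t : ℝ) : ℂ :=
  ∑ k ∈ Finset.range (m + 1),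
    if Even k then (Nat.choose m k : ℂ) * phiF x₀ f (m - k) x * (t : ℂ) ^ k else 0

/-- The generalized wave polynomial `u_{2m}(x,t) = Σ_{odd k≤m} C(m,k) φ_{m−k}(x) tᵏ`. -/
noncomputable def uB (x₀ : ℝ) (f : ℝ → ℂ) (m : ℕ) (x t : ℝ) : ℂ :=
  ∑ k ∈ Finset.range (m + 1),
    if Odd k then (Nat.choose m k : ℂ) * phiF x₀ f (m - k) x * (t : ℂ) ^ k else 0

/-- The trace `c_m(x) = u_{2m−1}(x,x)` (with `c₀ = f`). -/
noncomputable def cTrace (x₀ : ℝ) (f : ℝ → ℂ) (m : ℕ) (x : ℝ) : ℂ := uA x₀ f m x x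

/-- The trace `s_m(x) = u_{2m}(x,x)`. -/
noncomputable def sTrace (x₀ : ℝ) (f : ℝ → ℂ) (m : ℕ) (x : ℝ) : ℂ := uB x₀ f m x x

open Topology

section aux
variable {b : ℝ} {f : ℝ → ℂ}

lemma mem0 (hb : 0 < b) : (0:ℝ) ∈ Icc (-b) b := by constructor <;> linarith

lemma Ioo_sub (hb : 0 < b) : Ioo (0:ℝ) b ⊆ Icc (-b) b := fun x hx => ⟨by linarith [hx.1], le_of_lt hx.2⟩

lemma l_neBot (hb : 0 < b) : (𝓝[Ioo (0:ℝ) b] 0).NeBot := by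
  apply mem_closure_iff_nhdsWithin_neBot.mp
  rw [closure_Ioo hb.ne]
  exact ⟨le_rfl, hb.le⟩

lemma l_le (hb : 0 < b) : 𝓝[Ioo (0:ℝ) b] (0:ℝ) ≤ 𝓝[Icc (-b) b] 0 :=
  nhdsWithin_mono _ (Ioo_sub hb)

lemma cont_g (hf : ContinuousOn f (Icc (-b) b)) (hfne : ∀ x ∈ Icc (-b) b, f x ≠ 0) (e : ℤ) :
    ContinuousOn (fun s => (f s ^ 2) ^ e) (Icc (-b) b) :=
  (hf.pow 2).zpow₀ e fun x hx => Or.inl (pow_ne_zero 2 (hfne x hx))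

lemma tendsto_g (hb : 0 < b) (hf : ContinuousOn f (Icc (-b) b))
    (hfne : ∀ x ∈ Icc (-b) b, f x ≠ 0) (hf0 : f 0 = 1) (e : ℤ) :
    Tendsto (fun s => (f s ^ 2) ^ e) (𝓝[Ioo (0:ℝ) b] 0) (𝓝 1) := by
  have h := (cont_g hf hfne e 0 (mem0 hb)).mono_left (l_le hb)
  simpa [hf0] using h

lemma cont_primitive (hb : 0 < b) {u : ℝ → ℂ} (hu : ContinuousOn u (Icc (-b) b)) :
    ContinuousOn (fun x => ∫ s in (0:ℝ)..x, u s) (Icc (-b) b) := by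
  have he : Icc (-b) b = uIcc (-b) b := (uIcc_of_le (by linarith)).symm
  rw [he]
  refine intervalIntegral.continuousOn_primitive_interval' ?_ ?_
  · exact (hu.mono (by rw [he])).intervalIntegrable
  · rw [← he]; exact mem0 hb

lemma tendsto_primitive_div (hb : 0 < b) {u : ℝ → ℂ} (hu : ContinuousOn u (Icc (-b) b))
    (n : ℕ) (c : ℂ) (h : Tendsto (fun x => u x / (x:ℂ)^n) (𝓝[Ioo (0:ℝ) b] 0) (𝓝 c)) :
    Tendsto (fun x => (∫ s in (0:ℝ)..x, u s) / (x:ℂ)^(n+1)) (𝓝[Ioo (0:ℝ) b] 0)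
      (𝓝 (c / ((n:ℂ)+1))) := by
  rw [Metric.tendsto_nhdsWithin_nhds] at h ⊢
  intro ε hε
  obtain ⟨δ, hδ, hδ'⟩ := h (ε/2) (by linarith)
  refine ⟨δ, hδ, fun x hx hxd => ?_⟩
  have hx0 : 0 < x := hx.1
  have hxC : (x:ℂ) ≠ 0 := by exact_mod_cast hx0.ne'
  have key : ∀ s ∈ uIoc (0:ℝ) x, ‖u s - c * (s:ℂ)^n‖ ≤ (ε/2) * x ^ n := by
    intro s hs
    rw [uIoc_of_le hx0.le] at hs
    have hs0 : 0 < s := hs.1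
    have hsb : s ∈ Ioo (0:ℝ) b := ⟨hs0, lt_of_le_of_lt hs.2 hx.2⟩
    have hsd : dist s 0 < δ := by
      rw [Real.dist_eq, sub_zero, abs_of_pos hs0]
      calc s ≤ x := hs.2
        _ < δ := by rwa [Real.dist_eq, sub_zero, abs_of_pos hx0] at hxd
    have h1 := hδ' hsb hsd
    rw [Complex.dist_eq] at h1
    have hsC : (s:ℂ) ≠ 0 := by exact_mod_cast hs0.ne'
    have h2 : u s - c * (s:ℂ)^n = (u s / (s:ℂ)^n - c) * (s:ℂ)^n := by
      field_simp
    rw [h2, norm_mul]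
    have h3 : ‖(s:ℂ)^n‖ ≤ x ^ n := by
      rw [norm_pow, Complex.norm_real, Real.norm_eq_abs, abs_of_pos hs0]
      exact pow_le_pow_left₀ hs0.le hs.2 n
    exact mul_le_mul h1.le h3 (norm_nonneg _) (by linarith)
  have hsub : Icc (0:ℝ) x ⊆ Icc (-b) b := Icc_subset_Icc (by linarith) hx.2.le
  have hint : IntervalIntegrable u volume 0 x := by
    apply ContinuousOn.intervalIntegrable
    rw [uIcc_of_le hx0.le]; exact hu.mono hsub
  have hintp : IntervalIntegrable (fun s : ℝ => c * (s:ℂ)^n) volume 0 x := by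
    apply ContinuousOn.intervalIntegrable
    fun_prop
  have hpows : ∫ s in (0:ℝ)..x, c * (s:ℂ)^n = c * (x:ℂ)^(n+1) / ((n:ℂ)+1) := by
    rw [intervalIntegral.integral_const_mul]
    have : ∫ s in (0:ℝ)..x, (s:ℂ)^n = (((∫ s in (0:ℝ)..x, s^n : ℝ)):ℂ) := by
      rw [← intervalIntegral.integral_ofReal]
      norm_num
    rw [this, integral_pow]
    push_cast
    ring
  have h2 : ∫ s in (0:ℝ)..x, (u s - c * (s:ℂ)^n) =
      (∫ s in (0:ℝ)..x, u s) - c * (x:ℂ)^(n+1) / ((n:ℂ)+1) := by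
    rw [intervalIntegral.integral_sub hint hintp, hpows]
  have h3 : ‖(∫ s in (0:ℝ)..x, u s) - c * (x:ℂ)^(n+1) / ((n:ℂ)+1)‖ ≤ (ε/2) * x^n * |x - 0| := by
    rw [← h2]
    exact intervalIntegral.norm_integral_le_of_norm_le_const key
  rw [dist_eq_norm]
  have hxpow : ‖(x:ℂ)^(n+1)‖ = x^(n+1) := by
    rw [norm_pow, Complex.norm_real, Real.norm_eq_abs, abs_of_pos hx0]
  have heq : (∫ s in (0:ℝ)..x, u s) / (x:ℂ)^(n+1) - c / ((n:ℂ)+1)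
      = ((∫ s in (0:ℝ)..x, u s) - c * (x:ℂ)^(n+1) / ((n:ℂ)+1)) / (x:ℂ)^(n+1) := by
    have hn1 : ((n:ℂ)+1) ≠ 0 := Nat.cast_add_one_ne_zero n
    field_simp
  rw [heq, norm_div, hxpow]
  rw [div_lt_iff₀ (by positivity)]
  calc ‖(∫ s in (0:ℝ)..x, u s) - c * (x:ℂ)^(n+1) / ((n:ℂ)+1)‖ ≤ (ε/2) * x^n * |x - 0| := h3
    _ = (ε/2) * x^(n+1) := by rw [sub_zero, abs_of_pos hx0]; ring
    _ < ε * x^(n+1) := by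
        have : (0:ℝ) < x^(n+1) := by positivity
        nlinarith

variable (hb : 0 < b) (hf : ContinuousOn f (Icc (-b) b))
  (hfne : ∀ x ∈ Icc (-b) b, f x ≠ 0) (hf0 : f 0 = 1)

include hb hf hfne in
lemma contXrec : ∀ n, ContinuousOn (Xrec 0 f n) (Icc (-b) b)
  | 0 => continuousOn_const
  | (n+1) => by
    have hu : ContinuousOn (fun s => Xrec 0 f n s * (f s ^ 2) ^ ((-1:ℤ) ^ (n+1))) (Icc (-b) b) :=
      (contXrec n).mul (cont_g hf hfne _)
    show ContinuousOn (fun x => ((n:ℂ)+1) * ∫ s in (0:ℝ)..x,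
        Xrec 0 f n s * (f s ^ 2) ^ ((-1:ℤ) ^ (n+1))) (Icc (-b) b)
    exact continuousOn_const.mul (cont_primitive hb hu)

include hb hf hfne in
lemma contXtrec : ∀ n, ContinuousOn (Xtrec 0 f n) (Icc (-b) b)
  | 0 => continuousOn_const
  | (n+1) => by
    have hu : ContinuousOn (fun s => Xtrec 0 f n s * (f s ^ 2) ^ ((-1:ℤ) ^ n)) (Icc (-b) b) :=
      (contXtrec n).mul (cont_g hf hfne _)
    show ContinuousOn (fun x => ((n:ℂ)+1) * ∫ s in (0:ℝ)..x,
        Xtrec 0 f n s * (f s ^ 2) ^ ((-1:ℤ) ^ n)) (Icc (-b) b)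
    exact continuousOn_const.mul (cont_primitive hb hu)

include hb hf hfne hf0 in
lemma tendsto_step {X : ℝ → ℂ} (hX : ContinuousOn X (Icc (-b) b)) (n : ℕ) (e : ℤ)
    (hXt : Tendsto (fun x => X x / (x:ℂ)^n) (𝓝[Ioo (0:ℝ) b] 0) (𝓝 1)) :
    Tendsto (fun x => (((n:ℂ)+1) * ∫ s in (0:ℝ)..x, X s * (f s ^ 2) ^ e) / (x:ℂ)^(n+1))
      (𝓝[Ioo (0:ℝ) b] 0) (𝓝 1) := by
  have hu : ContinuousOn (fun s => X s * (f s ^ 2) ^ e) (Icc (-b) b) :=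
    hX.mul (cont_g hf hfne e)
  have h1 : Tendsto (fun x => (X x * (f x ^ 2) ^ e) / (x:ℂ)^n) (𝓝[Ioo (0:ℝ) b] 0) (𝓝 1) := by
    have := hXt.mul (tendsto_g hb hf hfne hf0 e)
    simpa [mul_div_right_comm] using this
  have h2 := (tendsto_primitive_div hb hu n 1 h1).const_mul ((n:ℂ)+1)
  have hn1 : ((n:ℂ)+1) ≠ 0 := Nat.cast_add_one_ne_zero n
  have h3 : ((n:ℂ)+1) * (1 / ((n:ℂ)+1)) = 1 := by field_simp
  rw [h3] at h2
  refine h2.congr fun x => ?_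
  ring

include hb hf hfne hf0 in
lemma tendstoXrec : ∀ n, Tendsto (fun x => Xrec 0 f n x / (x:ℂ)^n) (𝓝[Ioo (0:ℝ) b] 0) (𝓝 1)
  | 0 => by simpa [Xrec] using (tendsto_const_nhds : Tendsto (fun _ : ℝ => (1:ℂ)) _ (𝓝 1))
  | (n+1) =>
    tendsto_step hb hf hfne hf0 (contXrec hb hf hfne n) n ((-1:ℤ)^(n+1))
      (tendstoXrec n)

include hb hf hfne hf0 in
lemma tendstoXtrec : ∀ n, Tendsto (fun x => Xtrec 0 f n x / (x:ℂ)^n) (𝓝[Ioo (0:ℝ) b] 0) (𝓝 1)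
  | 0 => by simpa [Xtrec] using (tendsto_const_nhds : Tendsto (fun _ : ℝ => (1:ℂ)) _ (𝓝 1))
  | (n+1) =>
    tendsto_step hb hf hfne hf0 (contXtrec hb hf hfne n) n ((-1:ℤ)^n)
      (tendstoXtrec n)

include hb hf hfne hf0 in
lemma tendstoPhi (k : ℕ) :
    Tendsto (fun x => phiF 0 f k x / (x:ℂ)^k) (𝓝[Ioo (0:ℝ) b] 0) (𝓝 1) := by
  have hfl : Tendsto f (𝓝[Ioo (0:ℝ) b] 0) (𝓝 1) := by
    have := (hf 0 (mem0 hb)).mono_left (l_le hb)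
    rwa [hf0] at this
  unfold phiF
  by_cases h : Odd k
  · simp only [h, if_true]
    have := hfl.mul (tendstoXrec hb hf hfne hf0 k)
    simpa [mul_div_assoc] using this
  · simp only [h, if_false]
    have := hfl.mul (tendstoXtrec hb hf hfne hf0 k)
    simpa [mul_div_assoc] using this

lemma tendsto_div_pow_zero (hb : 0 < b) {T : ℝ → ℂ} {L : ℂ} {n m : ℕ} (h : m < n)
    (hT : Tendsto (fun x => T x / (x:ℂ)^n) (𝓝[Ioo (0:ℝ) b] 0) (𝓝 L)) :
    Tendsto (fun x => T x / (x:ℂ)^m) (𝓝[Ioo (0:ℝ) b] 0) (𝓝 0) := by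
  have h0 : Tendsto (fun x : ℝ => (x:ℂ)) (𝓝[Ioo (0:ℝ) b] 0) (𝓝 0) := by
    have := (Complex.continuous_ofReal.tendsto 0).mono_left
      (nhdsWithin_le_nhds (s := Ioo (0:ℝ) b))
    simpa using this
  have hx : Tendsto (fun x : ℝ => ((x:ℂ))^(n-m)) (𝓝[Ioo (0:ℝ) b] 0) (𝓝 0) := by
    have := h0.pow (n-m)
    simpa [zero_pow (show n - m ≠ 0 by omega)] using this
  have hmul := hx.mul hT
  rw [zero_mul] at hmul
  refine hmul.congr' ?_
  filter_upwards [self_mem_nhdsWithin] with x hxm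
  have hx0 : (x:ℂ) ≠ 0 := by exact_mod_cast (hxm.1.ne' : x ≠ 0)
  have hxn : (x:ℂ)^n = (x:ℂ)^(n-m) * (x:ℂ)^m := by
    rw [← pow_add]; congr 1; omega
  rw [hxn]
  field_simp

include hb hf hfne hf0 in
lemma tendsto_trace_gen (p : ℕ → Prop) [DecidablePred p] (m : ℕ) :
    Tendsto (fun x => (∑ k ∈ Finset.range (m+1),
        if p k then (Nat.choose m k : ℂ) * phiF 0 f (m-k) x * (x:ℂ)^k else 0) / (x:ℂ)^m)
      (𝓝[Ioo (0:ℝ) b] 0)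
      (𝓝 (∑ k ∈ Finset.range (m+1), if p k then (Nat.choose m k : ℂ) else 0)) := by
  have hev : ∀ᶠ x in 𝓝[Ioo (0:ℝ) b] 0,
      (∑ k ∈ Finset.range (m+1),
        if p k then (Nat.choose m k : ℂ) * (phiF 0 f (m-k) x / (x:ℂ)^(m-k)) else 0) =
      (∑ k ∈ Finset.range (m+1),
        if p k then (Nat.choose m k : ℂ) * phiF 0 f (m-k) x * (x:ℂ)^k else 0) / (x:ℂ)^m := by
    filter_upwards [self_mem_nhdsWithin] with x hx
    have hx0 : (x:ℂ) ≠ 0 := by exact_mod_cast (hx.1.ne' : x ≠ 0)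
    rw [Finset.sum_div]
    refine Finset.sum_congr rfl fun k hk => ?_
    rw [Finset.mem_range, Nat.lt_succ_iff] at hk
    by_cases he : p k
    · simp only [he, if_true]
      have hxm : (x:ℂ)^m = (x:ℂ)^(m-k) * (x:ℂ)^k := by
        rw [← pow_add]; congr 1; omega
      rw [hxm]
      field_simp
    · simp [he]
  refine Tendsto.congr' hev ?_
  apply tendsto_finset_sum
  intro k hk
  by_cases he : p k
  · simp only [he, if_true]
    have := (tendstoPhi hb hf hfne hf0 (m-k)).const_mul ((Nat.choose m k : ℂ))
    simpa using this
  · simp only [he, if_false]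
    exact tendsto_const_nhds

lemma main_gen (hb : 0 < b) {L : ℕ → ℂ} {T : ℕ → ℝ → ℂ} {F : Finset ℕ}
    (hT : ∀ n ∈ F, Tendsto (fun x => T n x / (x:ℂ)^n) (𝓝[Ioo (0:ℝ) b] 0) (𝓝 (L n)))
    (hL : ∀ n ∈ F, L n ≠ 0) (a : ℕ → ℂ)
    (ha : ∀ x ∈ Ioo (0:ℝ) b, ∑ n ∈ F, a n * T n x = 0) :
    ∀ n ∈ F, a n = 0 := by
  haveI := l_neBot hb
  intro n
  induction n using Nat.strong_induction_on with
  | _ m IH =>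
    intro hm
    have hTm : Tendsto (fun x => ∑ n ∈ F, a n * (T n x / (x:ℂ)^m)) (𝓝[Ioo (0:ℝ) b] 0)
        (𝓝 (a m * L m)) := by
      have hsum : (a m * L m) = ∑ n ∈ F, (if n = m then a m * L m else 0) := by
        rw [Finset.sum_ite_eq' F m (fun _ => a m * L m), if_pos hm]
      rw [hsum]
      apply tendsto_finset_sum
      intro n hn
      rcases lt_trichotomy n m with h | h | h
      · have han : a n = 0 := IH n h hn
        simp only [han, zero_mul, if_neg h.ne]
        exact tendsto_const_nhds
      · subst h
        simp only [if_pos rfl]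
        exact (hT n hn).const_mul (a n)
      · simp only [if_neg h.ne']
        have h0 := (tendsto_div_pow_zero hb h (hT n hn)).const_mul (a n)
        simpa using h0
    have hTz : Tendsto (fun x => ∑ n ∈ F, a n * (T n x / (x:ℂ)^m)) (𝓝[Ioo (0:ℝ) b] 0)
        (𝓝 0) := by
      have hev : ∀ᶠ x in 𝓝[Ioo (0:ℝ) b] 0,
          (0:ℂ) = ∑ n ∈ F, a n * (T n x / (x:ℂ)^m) := by
        filter_upwards [self_mem_nhdsWithin] with x hx
        have h1 := ha x hx
        have : ∑ n ∈ F, a n * (T n x / (x:ℂ)^m) = (∑ n ∈ F, a n * T n x) / (x:ℂ)^m := by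
          rw [Finset.sum_div]
          exact Finset.sum_congr rfl fun n _ => (mul_div_assoc _ _ _).symm
        rw [this, h1, zero_div]
      exact Tendsto.congr' hev tendsto_const_nhds
    have hALm : a m * L m = 0 := tendsto_nhds_unique hTm hTz
    exact (mul_eq_zero.mp hALm).resolve_right (hL m hm)

lemma sum_choose_ne_zero (p : ℕ → Prop) [DecidablePred p] (m k₀ : ℕ)
    (hk₀ : k₀ ∈ Finset.range (m+1)) (hp : p k₀) (hc : 0 < Nat.choose m k₀) :
    (∑ k ∈ Finset.range (m+1), if p k then (Nat.choose m k : ℂ) else 0) ≠ 0 := by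
  have hcast : (∑ k ∈ Finset.range (m+1), if p k then (Nat.choose m k : ℂ) else 0)
      = ((∑ k ∈ Finset.range (m+1), if p k then Nat.choose m k else 0 : ℕ) : ℂ) := by
    push_cast
    rfl
  rw [hcast, Ne, Nat.cast_eq_zero]
  have hpos : 0 < ∑ k ∈ Finset.range (m+1), if p k then Nat.choose m k else 0 := by
    refine lt_of_lt_of_le ?_ (Finset.single_le_sum
      (f := fun k => if p k then Nat.choose m k else 0) (fun i _ => Nat.zero_le _) hk₀)
    simpa [hp] using hc
  exact hpos.ne'

end aux

/-- linear independence of the systems `{c_n}_{n≥0}` and `{s_n}_{n≥1}` on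
`[-b,b]`. -/
theorem cTrace_sTrace_linearly_independent
    (b : ℝ) (hb : 0 < b) (q : ℝ → ℂ) (hq : ContinuousOn q (Set.Icc (-b) b))
    (f : ℝ → ℂ) (hf : ContDiffOn ℝ 2 f (Set.Icc (-b) b))
    (hfeq : ∀ x ∈ Set.Icc (-b) b,
      derivWithin (derivWithin f (Set.Icc (-b) b)) (Set.Icc (-b) b) x = q x * f x)
    (hfne : ∀ x ∈ Set.Icc (-b) b, f x ≠ 0) (hf0 : f 0 = 1) (N : ℕ) :
    (∀ a : ℕ → ℂ,
      (∀ x ∈ Set.Icc (-b) b, ∑ n ∈ Finset.range (N + 1), a n * cTrace 0 f n x = 0) →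
      ∀ n ∈ Finset.range (N + 1), a n = 0) ∧
    (∀ bc : ℕ → ℂ,
      (∀ x ∈ Set.Icc (-b) b, ∑ n ∈ Finset.Icc 1 N, bc n * sTrace 0 f n x = 0) →
      ∀ n ∈ Finset.Icc 1 N, bc n = 0) := by
  have hfc : ContinuousOn f (Set.Icc (-b) b) := hf.continuousOn
  constructor
  · intro a ha
    refine main_gen hb
      (L := fun n => ∑ k ∈ Finset.range (n+1), if Even k then (Nat.choose n k : ℂ) else 0)
      (T := fun n => cTrace 0 f n) ?_ ?_ a ?_
    · intro n _
      exact tendsto_trace_gen hb hfc hfne hf0 Even n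
    · intro n _
      exact sum_choose_ne_zero Even n 0 (by simp) (by simp) (by simp)
    · intro x hx
      exact ha x (Ioo_sub hb hx)
  · intro bc hbc
    refine main_gen hb
      (L := fun n => ∑ k ∈ Finset.range (n+1), if Odd k then (Nat.choose n k : ℂ) else 0)
      (T := fun n => sTrace 0 f n) ?_ ?_ bc ?_
    · intro n _
      exact tendsto_trace_gen hb hfc hfne hf0 Odd n
    · intro n hn
      rw [Finset.mem_Icc] at hn
      refine sum_choose_ne_zero Odd n 1 ?_ (by decide) ?_
      · simp only [Finset.mem_range]; omega
      · rw [Nat.choose_one_right]; omega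
    · intro x hx
      exact hbc x (Ioo_sub hb hx)
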